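/- Let U be a symmetric open neighborhood of the identity of a Hausdorff topological group G such that x·y = y·x for all x, y ∈ U. Then G is U-locally uniform: the multiplication map (x,y) ↦ x·y : U²×U² → G is uniformly continuous with respect to the left uniformity 𝓤_l. -/

import Mathlib

open Filter Set Topology Pointwise

/-- The left uniformity filter of a topological group. -/
def leftUF (G : Type*) [Group G] [TopologicalSpace G] : Filter (G × G) :=
  Filter.comap (fun p : G × G => p.1⁻¹ * p.2) (nhds 1)

/-- The right uniformity filter of a topological group. -/
def rightUF (G : Type*) [Group G] [TopologicalSpace G] : Filter (G × G) :=
  Filter.comap (fun p : G × G => p.1 * p.2⁻¹) (nhds 1)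

/-- The product of a uniformity-like filter on `G × G` with itself, as a filter on
`(G × G) × (G × G)`; this agrees with the product uniformity when the filter is a uniformity. -/
def prodUF {G : Type*} (F : Filter (G × G)) : Filter ((G × G) × (G × G)) :=
  Filter.comap (fun q : (G × G) × (G × G) => (q.1.1, q.2.1)) F ⊓
    Filter.comap (fun q : (G × G) × (G × G) => (q.1.2, q.2.2)) F

/-- Multiplication is uniformly continuous on the set `s ⊆ G × G` with respect to the
uniformity-like filter `F` on `G × G`. -/
def MulUCOn {G : Type*} [Mul G] (F : Filter (G × G)) (s : Set (G × G)) : Prop :=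
  Filter.Tendsto (fun q : (G × G) × (G × G) => (q.1.1 * q.1.2, q.2.1 * q.2.2))
    (prodUF F ⊓ 𝓟 (s ×ˢ s)) F

theorem stmt_5 {G : Type*} [Group G] [TopologicalSpace G] [IsTopologicalGroup G] [T2Space G]
    (U : Set G) (hUo : IsOpen U) (hU1 : (1 : G) ∈ U) (hUs : U⁻¹ = U)
    (hcomm : ∀ x ∈ U, ∀ y ∈ U, x * y = y * x) :
    MulUCOn (leftUF G) ((U ^ 2) ×ˢ (U ^ 2)) := by
  unfold MulUCOn leftUF prodUF
  rw [tendsto_comap_iff, tendsto_def]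
  intro W hW
  obtain ⟨V, hVo, hV1, hVW⟩ := exists_open_nhds_one_mul_subset hW
  set V' := V ∩ U with hV'def
  have hV' : V' ∈ 𝓝 (1 : G) := inter_mem (hVo.mem_nhds hV1) (hUo.mem_nhds hU1)
  have hA : ((fun q : (G × G) × (G × G) => q.1.1⁻¹ * q.2.1) ⁻¹' V') ∈
      (Filter.comap (fun q : (G × G) × (G × G) => (q.1.1, q.2.1))
        (Filter.comap (fun p : G × G => p.1⁻¹ * p.2) (nhds 1)) ⊓
      Filter.comap (fun q : (G × G) × (G × G) => (q.1.2, q.2.2))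
        (Filter.comap (fun p : G × G => p.1⁻¹ * p.2) (nhds 1))) ⊓
      𝓟 (((U ^ 2) ×ˢ (U ^ 2)) ×ˢ ((U ^ 2) ×ˢ (U ^ 2))) :=
    mem_inf_of_left (mem_inf_of_left (preimage_mem_comap (preimage_mem_comap hV')))
  have hB : ((fun q : (G × G) × (G × G) => q.1.2⁻¹ * q.2.2) ⁻¹' V') ∈
      (Filter.comap (fun q : (G × G) × (G × G) => (q.1.1, q.2.1))
        (Filter.comap (fun p : G × G => p.1⁻¹ * p.2) (nhds 1)) ⊓
      Filter.comap (fun q : (G × G) × (G × G) => (q.1.2, q.2.2))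
        (Filter.comap (fun p : G × G => p.1⁻¹ * p.2) (nhds 1))) ⊓
      𝓟 (((U ^ 2) ×ˢ (U ^ 2)) ×ˢ ((U ^ 2) ×ˢ (U ^ 2))) :=
    mem_inf_of_left (mem_inf_of_right (preimage_mem_comap (preimage_mem_comap hV')))
  have hC : (((U ^ 2) ×ˢ (U ^ 2)) ×ˢ ((U ^ 2) ×ˢ (U ^ 2)) :
      Set ((G × G) × (G × G))) ∈
      (Filter.comap (fun q : (G × G) × (G × G) => (q.1.1, q.2.1))
        (Filter.comap (fun p : G × G => p.1⁻¹ * p.2) (nhds 1)) ⊓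
      Filter.comap (fun q : (G × G) × (G × G) => (q.1.2, q.2.2))
        (Filter.comap (fun p : G × G => p.1⁻¹ * p.2) (nhds 1))) ⊓
      𝓟 (((U ^ 2) ×ˢ (U ^ 2)) ×ˢ ((U ^ 2) ×ˢ (U ^ 2))) :=
    mem_inf_of_right (mem_principal_self _)
  filter_upwards [hA, hB, hC] with q ha hb hc
  obtain ⟨⟨x, y⟩, ⟨x', y'⟩⟩ := q
  simp only [Set.mem_preimage] at ha hb
  obtain ⟨⟨hxU, hyU⟩, hx'U, hy'U⟩ := hc
  -- a := x⁻¹ * x' ∈ V' ⊆ U commutes with y ∈ U²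
  have haU : x⁻¹ * x' ∈ U := ha.2
  have hcy : (x⁻¹ * x') * y = y * (x⁻¹ * x') := by
    rw [pow_two] at hyU
    obtain ⟨u, hu, v, hv, rfl⟩ := hyU
    rw [← mul_assoc, hcomm _ haU u hu, mul_assoc, hcomm _ haU v hv, mul_assoc]
  have key : (x * y)⁻¹ * (x' * y') = (x⁻¹ * x') * (y⁻¹ * y') := by
    have : (x * y)⁻¹ * (x' * y') = y⁻¹ * ((x⁻¹ * x') * y) * (y⁻¹ * y') := by group
    rw [this, hcy]
    group
  show (x * y)⁻¹ * (x' * y') ∈ W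
  rw [key]
  exact hVW (Set.mul_mem_mul ha.1 hb.1)
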